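/- Let n and s be sufficiently large and let 0 < p, ε < 1. Suppose that G is an n-vertex (ε,s)-expander and εps ≥ 10^5·(log n)^3. Let H be the random subgraph of G with vertex set V(G) that contains each edge of G independently with probability p, and let s' = εps/(10^4·(log n)^2). Then the probability that H is not an (ε/4, s')-expander is less than 2/n. -/

import Mathlib

open Finset Real



/-- The external neighbourhood of a vertex set `U` in a graph `G`. -/
def extNbhd {α : Type*} (G : SimpleGraph α) (U : Set α) : Set α :=
  {v | v ∉ U ∧ ∃ u ∈ U, G.Adj u v}

/-- `G`, regarded as an `n`-vertex graph, is an `(ε, s)`-expander. -/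
def IsExpander {α : Type*} (n : ℕ) (G : SimpleGraph α) (ε s : ℝ) : Prop :=
  ∀ (U : Set α) (F : Set (Sym2 α)), F ⊆ G.edgeSet →
    1 ≤ U.ncard → (U.ncard : ℝ) ≤ 2 / 3 * n → (F.ncard : ℝ) ≤ s * U.ncard →
    ε * U.ncard / Real.logb 2 n ^ 2 ≤ ((extNbhd (G.deleteEdges F) U).ncard : ℝ)

/-- The probability of the event `E` for the random spanning subgraph of `G` which keeps
each edge of `G` independently with probability `p`. -/
noncomputable def edgeSubgraphProb (n : ℕ) (G : SimpleGraph (Fin n)) (p : ℝ)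
    (E : Set (SimpleGraph (Fin n))) : ℝ :=
  ∑ F : Finset (Sym2 (Fin n)),
    {F : Finset (Sym2 (Fin n)) | (↑F : Set (Sym2 (Fin n))) ⊆ G.edgeSet ∧
        SimpleGraph.fromEdgeSet (↑F : Set (Sym2 (Fin n))) ∈ E}.indicator
      (fun F => p ^ F.card * (1 - p) ^ (G.edgeSet.ncard - F.card)) F




/-- Splitting a sum over the powerset of a disjoint union. -/
lemma sum_powerset_union_disjoint {α : Type*} [DecidableEq α] {B C : Finset α} (hd : Disjoint B C) (g : Finset α → ℝ) :
    ∑ R ∈ (B ∪ C).powerset, g R = ∑ S ∈ B.powerset, ∑ T ∈ C.powerset, g (S ∪ T) := by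
  have key : ∑ R ∈ (B ∪ C).powerset, g R
      = ∑ P ∈ B.powerset ×ˢ C.powerset, g (P.1 ∪ P.2) := by
    refine (Finset.sum_nbij' (i := fun (P : Finset α × Finset α) => P.1 ∪ P.2)
      (j := fun R => (R ∩ B, R ∩ C)) ?_ ?_ ?_ ?_ ?_).symm
    · intro P hP
      rw [Finset.mem_product, Finset.mem_powerset, Finset.mem_powerset] at hP
      exact Finset.mem_powerset.2 (Finset.union_subset_union hP.1 hP.2)
    · intro R hR
      rw [Finset.mem_powerset] at hR
      rw [Finset.mem_product]
      exact ⟨Finset.mem_powerset.2 Finset.inter_subset_right,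
        Finset.mem_powerset.2 Finset.inter_subset_right⟩
    · intro P hP
      rw [Finset.mem_product, Finset.mem_powerset, Finset.mem_powerset] at hP
      have h1 : (P.1 ∪ P.2) ∩ B = P.1 := by
        ext x
        simp only [Finset.mem_inter, Finset.mem_union]
        constructor
        · rintro ⟨hx1 | hx2, hxB⟩
          · exact hx1
          · exact absurd hxB (Finset.disjoint_right.1 hd (hP.2 hx2))
        · exact fun hx => ⟨Or.inl hx, hP.1 hx⟩
      have h2 : (P.1 ∪ P.2) ∩ C = P.2 := by
        ext x
        simp only [Finset.mem_inter, Finset.mem_union]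
        constructor
        · rintro ⟨hx1 | hx2, hxC⟩
          · exact absurd hxC (Finset.disjoint_left.1 hd (hP.1 hx1))
          · exact hx2
        · exact fun hx => ⟨Or.inr hx, hP.2 hx⟩
      simp [h1, h2]
    · intro R hR
      rw [Finset.mem_powerset] at hR
      show R ∩ B ∪ R ∩ C = R
      rw [← Finset.inter_union_distrib_left]
      exact Finset.inter_eq_left.2 hR
    · intro P hP
      rfl
  rw [key, Finset.sum_product]

lemma block_sum {α : Type*} (p : ℝ) (D : Finset α) (h : ℕ → ℝ) :
    ∑ S ∈ D.powerset, p ^ S.card * (1 - p) ^ (D.card - S.card) * h S.card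
      = ∑ t ∈ Finset.range (D.card + 1),
          (D.card.choose t : ℝ) * (p ^ t * (1 - p) ^ (D.card - t) * h t) := by
  rw [Finset.sum_powerset_apply_card (fun m => p ^ m * (1 - p) ^ (D.card - m) * h m)]
  refine Finset.sum_congr rfl fun t _ => ?_
  rw [nsmul_eq_mul]

lemma mass_one {α : Type*} (p : ℝ) (A : Finset α) :
    ∑ R ∈ A.powerset, p ^ R.card * (1 - p) ^ (A.card - R.card) = 1 := by
  have h1 := block_sum p A (fun _ => 1)
  simp only [mul_one] at h1
  calc ∑ R ∈ A.powerset, p ^ R.card * (1 - p) ^ (A.card - R.card)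
      = ∑ t ∈ Finset.range (A.card + 1),
          p ^ t * (1 - p) ^ (A.card - t) * ((A.card.choose t : ℕ) : ℝ) := by
        rw [h1]; exact Finset.sum_congr rfl fun t _ => by ring
    _ = (p + (1 - p)) ^ A.card := (add_pow p (1 - p) A.card).symm
    _ = 1 := by norm_num

lemma prod_factorization {α ι : Type*} [DecidableEq α] [DecidableEq ι] (p : ℝ) (s : Finset ι) :
    ∀ (A : Finset α) (D : ι → Finset α), (∀ i ∈ s, D i ⊆ A) →
    (∀ i ∈ s, ∀ j ∈ s, i ≠ j → Disjoint (D i) (D j)) → ∀ (h : ι → ℕ → ℝ),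
    ∑ R ∈ A.powerset, p ^ R.card * (1 - p) ^ (A.card - R.card) * ∏ i ∈ s, h i (R ∩ D i).card
      = ∏ i ∈ s, ∑ S ∈ (D i).powerset,
          p ^ S.card * (1 - p) ^ ((D i).card - S.card) * h i S.card := by
  induction s using Finset.induction_on with
  | empty =>
    intro A D _ _ h
    simp only [Finset.prod_empty, mul_one]
    exact mass_one p A
  | @insert j s hj ih =>
    intro A D hsub hdisj h
    have hDA : D j ⊆ A := hsub j (Finset.mem_insert_self j s)
    have hdisjA : Disjoint (D j) (A \ D j) := Finset.disjoint_sdiff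
    have hA : A = D j ∪ (A \ D j) := (Finset.union_sdiff_of_subset hDA).symm
    have hcardA : A.card = (D j).card + (A \ D j).card := by
      conv_lhs => rw [hA]
      rw [Finset.card_union_of_disjoint hdisjA]
    calc ∑ R ∈ A.powerset, p ^ R.card * (1 - p) ^ (A.card - R.card)
          * ∏ i ∈ insert j s, h i (R ∩ D i).card
        = ∑ S ∈ (D j).powerset, ∑ T ∈ (A \ D j).powerset,
            p ^ (S ∪ T).card * (1 - p) ^ (A.card - (S ∪ T).card)
            * ∏ i ∈ insert j s, h i ((S ∪ T) ∩ D i).card := by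
          conv_lhs => rw [hA]
          rw [sum_powerset_union_disjoint hdisjA]
          rw [← hA]
      _ = ∑ S ∈ (D j).powerset,
            (p ^ S.card * (1 - p) ^ ((D j).card - S.card) * h j S.card)
            * ∑ T ∈ (A \ D j).powerset,
              (p ^ T.card * (1 - p) ^ ((A \ D j).card - T.card)
                * ∏ i ∈ s, h i (T ∩ D i).card) := by
          refine Finset.sum_congr rfl fun S hS => ?_
          rw [Finset.mul_sum]
          refine Finset.sum_congr rfl fun T hT => ?_
          rw [Finset.mem_powerset] at hS hT
          have hST : Disjoint S T := hdisjA.mono hS hT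
          have hcST : (S ∪ T).card = S.card + T.card := Finset.card_union_of_disjoint hST
          have hSj : (S ∪ T) ∩ D j = S := by
            rw [Finset.union_inter_distrib_right, Finset.inter_eq_left.2 hS,
              (Finset.disjoint_iff_inter_eq_empty.1 (Finset.sdiff_disjoint.mono_left hT)
                : T ∩ D j = ∅), Finset.union_empty]
          have hSi : ∀ i ∈ s, (S ∪ T) ∩ D i = T ∩ D i := by
            intro i hi
            have hne : j ≠ i := fun hh => hj (hh ▸ hi)
            have hdji : Disjoint (D j) (D i) :=
              hdisj j (Finset.mem_insert_self j s) i (Finset.mem_insert_of_mem hi) hne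
            rw [Finset.union_inter_distrib_right,
              Finset.disjoint_iff_inter_eq_empty.1 (hdji.mono_left hS), Finset.empty_union]
          have hexp : A.card - (S.card + T.card)
              = ((D j).card - S.card) + ((A \ D j).card - T.card) := by
            have h1 : S.card ≤ (D j).card := Finset.card_le_card hS
            have h2 : T.card ≤ (A \ D j).card := Finset.card_le_card hT
            omega
          have hSi' : ∀ i ∈ s, h i ((S ∪ T) ∩ D i).card = h i (T ∩ D i).card :=
            fun i hi => by rw [hSi i hi]
          rw [Finset.prod_insert hj, hSj, Finset.prod_congr rfl hSi', hcST, hexp,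
            pow_add, pow_add]
          ring
      _ = (∑ S ∈ (D j).powerset, p ^ S.card * (1 - p) ^ ((D j).card - S.card) * h j S.card)
            * ∑ T ∈ (A \ D j).powerset,
              (p ^ T.card * (1 - p) ^ ((A \ D j).card - T.card)
                * ∏ i ∈ s, h i (T ∩ D i).card) := by
          rw [← Finset.sum_mul]
      _ = ∏ i ∈ insert j s, ∑ S ∈ (D i).powerset,
            p ^ S.card * (1 - p) ^ ((D i).card - S.card) * h i S.card := by
          rw [Finset.prod_insert hj]
          congr 1
          refine ih (A \ D j) D ?_ ?_ h
          · intro i hi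
            intro x hx
            rw [Finset.mem_sdiff]
            have hne : j ≠ i := fun hh => hj (hh ▸ hi)
            refine ⟨hsub i (Finset.mem_insert_of_mem hi) hx, fun hxj => ?_⟩
            exact Finset.disjoint_left.1
              (hdisj j (Finset.mem_insert_self j s) i (Finset.mem_insert_of_mem hi) hne) hxj hx
          · intro i hi i' hi' hne
            exact hdisj i (Finset.mem_insert_of_mem hi) i' (Finset.mem_insert_of_mem hi') hne

lemma mgf_bound (p M : ℝ) (hp0 : 0 < p) (hp1 : p < 1) (hM : 0 < M) (m : ℕ) :
    ∑ t ∈ Finset.range (m + 1), (m.choose t : ℝ) * (p ^ t * (1 - p) ^ (m - t)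
      * Real.exp (-(min (t : ℝ) M) / 8))
    ≤ Real.exp (-(min (p * m) M) / 9 + Real.exp (-M / 72)) := by
  have h1p : (0:ℝ) < 1 - p := by linarith
  have key : ∀ t ∈ Finset.range (m + 1), (m.choose t : ℝ) * (p ^ t * (1 - p) ^ (m - t)
      * Real.exp (-(min (t : ℝ) M) / 8))
      ≤ (m.choose t : ℝ) * ((p * Real.exp (-(1:ℝ)/8)) ^ t * (1 - p) ^ (m - t))
        + Real.exp (-M / 8) * ((m.choose t : ℝ) * (p ^ t * (1 - p) ^ (m - t))) := by
    intro t _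
    have hw : (0:ℝ) ≤ (m.choose t : ℝ) * (p ^ t * (1 - p) ^ (m - t)) := by positivity
    have hsplit : Real.exp (-(min (t : ℝ) M) / 8)
        ≤ Real.exp (-(t:ℝ)/8) + Real.exp (-M/8) := by
      rcases min_cases (t : ℝ) M with ⟨hmin, _⟩ | ⟨hmin, _⟩
      · rw [hmin]; nlinarith [Real.exp_pos (-M/8)]
      · rw [hmin]; nlinarith [Real.exp_pos (-(t:ℝ)/8)]
    have hpow : p ^ t * Real.exp (-(t:ℝ)/8) = (p * Real.exp (-(1:ℝ)/8)) ^ t := by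
      rw [mul_pow, ← Real.exp_nat_mul]
      norm_num
      left
      ring_nf
    calc (m.choose t : ℝ) * (p ^ t * (1 - p) ^ (m - t) * Real.exp (-(min (t : ℝ) M) / 8))
        ≤ (m.choose t : ℝ) * (p ^ t * (1 - p) ^ (m - t)
            * (Real.exp (-(t:ℝ)/8) + Real.exp (-M/8))) := by
          have := mul_le_mul_of_nonneg_left hsplit hw
          nlinarith [hw, hsplit, Real.exp_pos (-(min (t : ℝ) M) / 8)]
      _ = (m.choose t : ℝ) * ((p ^ t * Real.exp (-(t:ℝ)/8)) * (1 - p) ^ (m - t))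
            + Real.exp (-M / 8) * ((m.choose t : ℝ) * (p ^ t * (1 - p) ^ (m - t))) := by ring
      _ = (m.choose t : ℝ) * ((p * Real.exp (-(1:ℝ)/8)) ^ t * (1 - p) ^ (m - t))
            + Real.exp (-M / 8) * ((m.choose t : ℝ) * (p ^ t * (1 - p) ^ (m - t))) := by
          rw [hpow]
  have hsum := Finset.sum_le_sum key
  rw [Finset.sum_add_distrib, ← Finset.mul_sum] at hsum
  have hmass : ∑ t ∈ Finset.range (m + 1), (m.choose t : ℝ) * (p ^ t * (1 - p) ^ (m - t)) = 1 := by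
    calc ∑ t ∈ Finset.range (m + 1), (m.choose t : ℝ) * (p ^ t * (1 - p) ^ (m - t))
        = ∑ t ∈ Finset.range (m + 1), p ^ t * (1 - p) ^ (m - t) * (m.choose t : ℝ) := by
          exact Finset.sum_congr rfl fun t _ => by ring
      _ = (p + (1 - p)) ^ m := (add_pow p (1 - p) m).symm
      _ = 1 := by norm_num
  have hmgf : ∑ t ∈ Finset.range (m + 1),
      (m.choose t : ℝ) * ((p * Real.exp (-(1:ℝ)/8)) ^ t * (1 - p) ^ (m - t))
      = (p * Real.exp (-(1:ℝ)/8) + (1 - p)) ^ m := by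
    rw [add_pow]
    exact Finset.sum_congr rfl fun t _ => by ring
  rw [hmgf, hmass, mul_one] at hsum
  -- now bound the two terms
  have hbase : p * Real.exp (-(1:ℝ)/8) + (1 - p) ≤ Real.exp (-p/9) := by
    have he : Real.exp (-(1:ℝ)/8) ≤ 8/9 := by
      have h9 : (9:ℝ)/8 ≤ Real.exp (1/8) := by
        calc (9:ℝ)/8 = 1/8 + 1 := by norm_num
          _ ≤ Real.exp (1/8) := Real.add_one_le_exp _
      have heq : Real.exp (-(1:ℝ)/8) = (Real.exp ((1:ℝ)/8))⁻¹ := by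
        rw [← Real.exp_neg]; norm_num
      rw [heq]
      calc (Real.exp ((1:ℝ)/8))⁻¹ ≤ ((9:ℝ)/8)⁻¹ := by
            apply inv_anti₀ (by norm_num) h9
        _ = 8/9 := by norm_num
    have h2 : p * Real.exp (-(1:ℝ)/8) + (1 - p) ≤ 1 - p/9 := by nlinarith
    have h3 : (1:ℝ) - p/9 ≤ Real.exp (-p/9) := by
      have := Real.add_one_le_exp (-p/9)
      linarith
    linarith
  have hbase0 : (0:ℝ) ≤ p * Real.exp (-(1:ℝ)/8) + (1 - p) := by
    positivity
  have hpowm : (p * Real.exp (-(1:ℝ)/8) + (1 - p)) ^ m ≤ Real.exp (-(p*m)/9) := by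
    calc (p * Real.exp (-(1:ℝ)/8) + (1 - p)) ^ m ≤ (Real.exp (-p/9)) ^ m :=
          pow_le_pow_left₀ hbase0 hbase m
      _ = Real.exp (-(p*m)/9) := by
          rw [← Real.exp_nat_mul]; ring_nf
  have hmu : -(p * m)/9 ≤ -(min (p * m) M)/9 := by
    have : min (p * m) M ≤ p * m := min_le_left _ _
    linarith
  have hminM : min (p * m) M ≤ M := min_le_right _ _
  have hterm1 : (p * Real.exp (-(1:ℝ)/8) + (1 - p)) ^ m
      ≤ Real.exp (-(min (p * m) M)/9) := by
    refine hpowm.trans ?_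
    exact Real.exp_le_exp.2 hmu
  have hterm2 : Real.exp (-M/8)
      ≤ Real.exp (-(min (p * m) M)/9) * Real.exp (-M/72) := by
    rw [← Real.exp_add]
    apply Real.exp_le_exp.2
    linarith
  have hfinal : Real.exp (-(min (p * m) M)/9) + Real.exp (-(min (p * m) M)/9) * Real.exp (-M/72)
      ≤ Real.exp (-(min (p * m) M)/9 + Real.exp (-M / 72)) := by
    rw [Real.exp_add]
    have h4 : (1:ℝ) + Real.exp (-M/72) ≤ Real.exp (Real.exp (-M/72)) :=
      Real.add_one_le_exp _ |>.trans_eq' (by ring_nf)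
    nlinarith [Real.exp_pos (-(min (p * m) M)/9), Real.exp_pos (-M/72),
      Real.exp_pos (Real.exp (-M/72))]
  linarith

/-- Shape invariant: every edge in the block `D v` joins `U` to the external vertex `v`. -/
def FanShape {n : ℕ} (G : SimpleGraph (Fin n)) (U : Set (Fin n))
    (D : Fin n → Finset (Sym2 (Fin n))) : Prop :=
  ∀ v : Fin n, ∀ e ∈ D v, v ∉ U ∧ e ∈ G.edgeSet ∧ ∃ u ∈ U, e = s(u, v)

lemma fanShape_disjoint {n : ℕ} {G : SimpleGraph (Fin n)} {U : Set (Fin n)}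
    {D : Fin n → Finset (Sym2 (Fin n))} (hD : FanShape G U D) :
    ∀ v w : Fin n, v ≠ w → Disjoint (D v) (D w) := by
  intro v w hvw
  rw [Finset.disjoint_left]
  intro e hev hew
  obtain ⟨hvU, _, u, huU, hue⟩ := hD v e hev
  obtain ⟨hwU, _, u', hu'U, hu'e⟩ := hD w e hew
  rw [hue] at hu'e
  rw [Sym2.eq_iff] at hu'e
  rcases hu'e with ⟨_, h2⟩ | ⟨h1, h2⟩
  · exact hvw h2
  · exact hvU (h2 ▸ hu'U)

lemma fan_construction {n : ℕ} (G : SimpleGraph (Fin n)) (s ε : ℝ)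
    (hexp : IsExpander n G ε s) (hε0 : 0 < ε) (hε1 : ε < 1) (hs : 4 ≤ s) (hn : 2 ≤ n)
    (U : Set (Fin n)) (hU1 : 1 ≤ U.ncard) (hU2 : (U.ncard : ℝ) ≤ 2 / 3 * n) :
    ∃ (D : Fin n → Finset (Sym2 (Fin n))) (I q : ℕ),
      FanShape G U D ∧
      (∀ v, (D v).card ≤ I) ∧ (∑ v, (D v).card = I * q) ∧
      (ε * U.ncard / Real.logb 2 n ^ 2 ≤ (q : ℝ)) ∧
      ((I : ℝ) * q ≤ s * U.ncard) ∧ (s / 4 ≤ (I : ℝ)) := by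
  classical
  set L : ℝ := Real.logb 2 n with hL
  have hL1 : 1 ≤ L := by
    rw [hL]
    calc (1:ℝ) = Real.logb 2 2 := (Real.logb_self_eq_one (by norm_num)).symm
      _ ≤ Real.logb 2 n := Real.logb_le_logb_of_le (by norm_num) (by norm_num)
          (by exact_mod_cast hn)
  have hk1 : (1:ℝ) ≤ (U.ncard : ℝ) := by exact_mod_cast hU1
  have hkpos : (0:ℝ) < (U.ncard : ℝ) := by linarith
  set k : ℕ := U.ncard with hkdef
  set x : ℝ := ε * k / L ^ 2 with hx
  have hxpos : 0 < x := by
    apply div_pos (by positivity)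
    positivity
  set q : ℕ := ⌈x⌉₊ with hq
  have hq1 : 1 ≤ q := Nat.one_le_ceil_iff.2 hxpos
  have hxq : x ≤ (q : ℝ) := Nat.le_ceil x
  have hqk : (q : ℝ) ≤ 2 * k := by
    have h1 : (q : ℝ) < x + 1 := Nat.ceil_lt_add_one hxpos.le
    have hL2 : (1:ℝ) ≤ L ^ 2 := by nlinarith
    have h2 : x ≤ k := by
      rw [hx]
      rw [div_le_iff₀ (by positivity)]
      nlinarith
    nlinarith
  have hqpos : (0:ℝ) < (q:ℝ) := by exact_mod_cast hq1
  set y : ℝ := s * k / q with hy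
  set I : ℕ := ⌊y⌋₊ with hI
  have hy2 : 2 ≤ y := by
    rw [hy]
    rw [le_div_iff₀ hqpos]
    nlinarith
  have hIy : (I : ℝ) ≤ y := Nat.floor_le (by linarith)
  have hIy2 : y - 1 < (I : ℝ) := Nat.sub_one_lt_floor y
  have hIq : (I : ℝ) * q ≤ s * k := by
    have := mul_le_mul_of_nonneg_right hIy hqpos.le
    calc (I:ℝ) * q ≤ y * q := this
      _ = s * k := by rw [hy]; field_simp
  have hIs : s / 4 ≤ (I : ℝ) := by
    have hyk : s / 2 ≤ y := by
      rw [hy, le_div_iff₀ hqpos]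
      calc s / 2 * q ≤ s / 2 * (2 * k) := by
            apply mul_le_mul_of_nonneg_left hqk (by linarith)
        _ = s * k := by ring
    nlinarith
  -- inductive construction of the rounds
  have main : ∀ j : ℕ, j ≤ I → ∃ D : Fin n → Finset (Sym2 (Fin n)),
      FanShape G U D ∧ (∀ v, (D v).card ≤ j) ∧ (∑ v, (D v).card = j * q) := by
    intro j hjI
    induction j with
    | zero => exact ⟨fun _ => ∅, fun v e he => absurd he (Finset.notMem_empty e),
        fun v => by simp, by simp⟩
    | succ j ihj =>
      obtain ⟨D, hshape, hcard, hsum⟩ := ihj (le_trans (Nat.le_succ j) hjI)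
      set F : Finset (Sym2 (Fin n)) := Finset.univ.biUnion D with hF
      have hFsub : (↑F : Set (Sym2 (Fin n))) ⊆ G.edgeSet := by
        intro e he
        rw [Finset.coe_biUnion] at he
        simp only [Set.mem_iUnion, Finset.mem_coe] at he
        obtain ⟨v, _, hev⟩ := he
        exact (hshape v e hev).2.1
      have hFcard : F.card = j * q := by
        rw [hF, Finset.card_biUnion (fun v _ w _ hvw => fanShape_disjoint hshape v w hvw)]
        exact hsum
      have hFncard : ((↑F : Set (Sym2 (Fin n))).ncard : ℝ) ≤ s * k := by
        rw [Set.ncard_coe_finset, hFcard]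
        push_cast
        have hjI' : (j : ℝ) ≤ I := by exact_mod_cast le_trans (Nat.le_succ j) hjI
        calc (j : ℝ) * q ≤ (I : ℝ) * q := by
              apply mul_le_mul_of_nonneg_right hjI' hqpos.le
          _ ≤ s * k := hIq
      have hexp' := hexp U ↑F hFsub hU1 hU2 hFncard
      have hNq : q ≤ (extNbhd (G.deleteEdges ↑F) U).ncard := by
        have : x ≤ ((extNbhd (G.deleteEdges ↑F) U).ncard : ℝ) := hexp'
        exact Nat.ceil_le.2 this
      obtain ⟨W, hWsub, hWcard⟩ := Set.exists_subset_card_eq hNq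
      have hWfin : W.Finite := Set.toFinite W
      set Wf : Finset (Fin n) := hWfin.toFinset with hWf
      have hWfcard : Wf.card = q := by
        rw [hWf, ← Set.ncard_eq_toFinset_card W hWfin]
        exact hWcard
      -- choose a partner in U for each vertex of W
      have hWprop : ∀ v ∈ Wf, v ∉ U ∧ ∃ u ∈ U, (G.deleteEdges ↑F).Adj u v := by
        intro v hv
        rw [hWf, Set.Finite.mem_toFinset] at hv
        exact hWsub hv
      choose hWnotU g hgU hgAdj using hWprop
      set D' : Fin n → Finset (Sym2 (Fin n)) :=
        fun v => if hv : v ∈ Wf then insert s(g v hv, v) (D v) else D v with hD'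
      have hDF : ∀ v : Fin n, D v ⊆ F := fun v e he => Finset.mem_biUnion.2 ⟨v, mem_univ v, he⟩
      have hnew : ∀ (v : Fin n) (hv : v ∈ Wf), s(g v hv, v) ∉ D v := by
        intro v hv hmem
        have hadj := hgAdj v hv
        rw [SimpleGraph.deleteEdges_adj] at hadj
        exact hadj.2 (hDF v hmem)
      have hshape' : FanShape G U D' := by
        intro v e he
        have he' : e ∈ (if hv : v ∈ Wf then insert s(g v hv, v) (D v) else D v) := he
        clear he
        by_cases hv : v ∈ Wf
        · rw [dif_pos hv] at he'
          rcases Finset.mem_insert.1 he' with he | he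
          · subst he
            have hadj := hgAdj v hv
            rw [SimpleGraph.deleteEdges_adj] at hadj
            exact ⟨hWnotU v hv, (SimpleGraph.mem_edgeSet G).2 hadj.1, g v hv, hgU v hv, rfl⟩
          · exact hshape v e he
        · rw [dif_neg hv] at he'
          exact hshape v e he'
      have hcard' : ∀ v : Fin n, (D' v).card
          = (D v).card + (if v ∈ Wf then 1 else 0) := by
        intro v
        show (if hv : v ∈ Wf then insert s(g v hv, v) (D v) else D v).card
          = (D v).card + (if v ∈ Wf then 1 else 0)
        by_cases hv : v ∈ Wf
        · rw [dif_pos hv, if_pos hv, Finset.card_insert_of_notMem (hnew v hv)]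
        · rw [dif_neg hv, if_neg hv, add_zero]
      refine ⟨D', hshape', fun v => ?_, ?_⟩
      · rw [hcard' v]
        have := hcard v
        split <;> omega
      · calc ∑ v : Fin n, (D' v).card
            = ∑ v : Fin n, ((D v).card + if v ∈ Wf then 1 else 0) :=
              Finset.sum_congr rfl fun v _ => hcard' v
          _ = (∑ v : Fin n, (D v).card) + ∑ v : Fin n, (if v ∈ Wf then 1 else 0) :=
              Finset.sum_add_distrib
          _ = j * q + q := by
              rw [hsum]
              congr 1
              calc ∑ v : Fin n, (if v ∈ Wf then 1 else 0)
                  = ∑ v ∈ Finset.univ ∩ Wf, 1 := Finset.sum_ite_mem _ _ _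
                _ = q := by rw [Finset.univ_inter, Finset.sum_const, hWfcard, smul_eq_mul,
                    mul_one]
          _ = (j + 1) * q := by ring
  obtain ⟨D, hshape, hcard, hsum⟩ := main I le_rfl
  exact ⟨D, I, q, hshape, hcard, hsum, hxq, hIq, hIs⟩

/-- Deterministic lemma : if the subgraph given by `R` fails the expansion property at `U`,
then the truncated count `Z` is small. -/
lemma fail_imp_Z_small {n : ℕ} {G : SimpleGraph (Fin n)} {U : Set (Fin n)}
    {D : Fin n → Finset (Sym2 (Fin n))} (hD : FanShape G U D)
    (M s' b : ℝ) (hM : 0 < M)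
    (R : Finset (Sym2 (Fin n)))
    (hfail : ∃ F' : Set (Sym2 (Fin n)),
      F' ⊆ (SimpleGraph.fromEdgeSet (↑R : Set (Sym2 (Fin n)))).edgeSet ∧
      ((F'.ncard : ℝ) ≤ s') ∧
      (((extNbhd ((SimpleGraph.fromEdgeSet (↑R : Set (Sym2 (Fin n)))).deleteEdges F')
          U).ncard : ℝ) < b)) :
    ∑ v : Fin n, min (((R ∩ D v).card : ℝ)) M < M * b + s' := by
  classical
  obtain ⟨F', hF'sub, hF'card, hNsmall⟩ := hfail
  set H := SimpleGraph.fromEdgeSet (↑R : Set (Sym2 (Fin n))) with hH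
  have hF'fin : F'.Finite := Set.toFinite F'
  set Ff : Finset (Sym2 (Fin n)) := hF'fin.toFinset with hFf
  have hFfR : ∀ e ∈ Ff, e ∈ R := by
    intro e he
    rw [hFf, Set.Finite.mem_toFinset] at he
    have := hF'sub he
    rw [hH, SimpleGraph.edgeSet_fromEdgeSet] at this
    exact this.1
  set N : Set (Fin n) := extNbhd (H.deleteEdges F') U with hN
  -- the set of external vertices touched by surviving fan edges
  set T : Finset (Fin n) := Finset.univ.filter (fun v => ((R \ Ff) ∩ D v).Nonempty) with hT
  have hTsubN : ∀ v ∈ T, v ∈ N := by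
    intro v hv
    rw [hT, Finset.mem_filter] at hv
    obtain ⟨e, he⟩ := hv.2
    rw [Finset.mem_inter, Finset.mem_sdiff] at he
    obtain ⟨⟨heR, heF⟩, heD⟩ := he
    obtain ⟨hvU, heG, u, huU, hue⟩ := hD v e heD
    have hune : u ≠ v := by
      intro h; rw [h] at huU; exact hvU huU
    refine ⟨hvU, u, huU, ?_⟩
    rw [SimpleGraph.deleteEdges_adj]
    constructor
    · rw [hH, SimpleGraph.fromEdgeSet_adj]
      exact ⟨by rw [← hue]; exact_mod_cast heR, hune⟩
    · rw [← hue]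
      intro hmem
      exact heF (by rw [hFf, Set.Finite.mem_toFinset]; exact hmem)
  have hTcard : (T.card : ℝ) ≤ (N.ncard : ℝ) := by
    have hsub : (↑T : Set (Fin n)) ⊆ N := fun v hv => hTsubN v hv
    have h2 := Set.ncard_le_ncard hsub (Set.toFinite N)
    rw [Set.ncard_coe_finset] at h2
    exact_mod_cast h2
  -- pointwise bound
  have hpoint : ∀ v : Fin n, min (((R ∩ D v).card : ℝ)) M
      ≤ (if v ∈ T then M else 0) + ((Ff ∩ D v).card : ℝ) := by
    intro v
    by_cases hv : v ∈ T
    · rw [if_pos hv]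
      calc min (((R ∩ D v).card : ℝ)) M ≤ M := min_le_right _ M
        _ ≤ M + ((Ff ∩ D v).card : ℝ) := by
            have : (0:ℝ) ≤ ((Ff ∩ D v).card : ℝ) := by positivity
            linarith
    · rw [if_neg hv]
      have hempty : (R \ Ff) ∩ D v = ∅ := by
        by_contra hne
        apply hv
        rw [hT, Finset.mem_filter]
        exact ⟨Finset.mem_univ v, Finset.nonempty_iff_ne_empty.2 hne⟩
      have h1 : (R ∩ D v).card ≤ (Ff ∩ D v).card := by
        apply Finset.card_le_card
        intro e he
        rw [Finset.mem_inter] at he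
        rw [Finset.mem_inter]
        refine ⟨?_, he.2⟩
        by_contra hef
        have hmem : e ∈ (R \ Ff) ∩ D v := by
          rw [Finset.mem_inter, Finset.mem_sdiff]
          exact ⟨⟨he.1, hef⟩, he.2⟩
        rw [hempty] at hmem
        exact Finset.notMem_empty e hmem
      calc min (((R ∩ D v).card : ℝ)) M ≤ ((R ∩ D v).card : ℝ) := min_le_left _ _
        _ ≤ 0 + ((Ff ∩ D v).card : ℝ) := by
            rw [zero_add]; exact_mod_cast h1
  -- sum the pointwise bounds
  have hsum := Finset.sum_le_sum (fun v (_ : v ∈ Finset.univ) => hpoint v)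
  rw [Finset.sum_add_distrib] at hsum
  have hsum1 : ∑ v : Fin n, (if v ∈ T then M else 0) = T.card * M := by
    rw [Finset.sum_ite_mem, Finset.univ_inter, Finset.sum_const, nsmul_eq_mul]
  have hsum2 : ∑ v : Fin n, ((Ff ∩ D v).card : ℝ) ≤ (Ff.card : ℝ) := by
    have hdisj : ∀ v ∈ Finset.univ, ∀ w ∈ Finset.univ, v ≠ w
        → Disjoint (Ff ∩ D v) (Ff ∩ D w) := fun v _ w _ hvw =>
      (fanShape_disjoint hD v w hvw).mono Finset.inter_subset_right Finset.inter_subset_right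
    have hcup : (Finset.univ.biUnion (fun v => Ff ∩ D v)).card
        = ∑ v : Fin n, (Ff ∩ D v).card := Finset.card_biUnion hdisj
    have hsubset : Finset.univ.biUnion (fun v => Ff ∩ D v) ⊆ Ff :=
      Finset.biUnion_subset.2 fun v _ => Finset.inter_subset_left
    have h3 := Finset.card_le_card hsubset
    rw [hcup] at h3
    have h4 : ∑ v : Fin n, ((Ff ∩ D v).card : ℝ) = ((∑ v : Fin n, (Ff ∩ D v).card : ℕ) : ℝ) := by
      push_cast
      rfl
    rw [h4]
    exact_mod_cast h3
  have hFfcard : (Ff.card : ℝ) ≤ s' := by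
    rw [hFf, ← Set.ncard_eq_toFinset_card F' hF'fin]
    exact hF'card
  have hfinal : (T.card : ℝ) * M < M * b := by
    calc (T.card : ℝ) * M ≤ (N.ncard : ℝ) * M := by
          apply mul_le_mul_of_nonneg_right hTcard hM.le
      _ < b * M := by
          apply mul_lt_mul_of_pos_right hNsmall hM
      _ = M * b := mul_comm _ _
  rw [hsum1] at hsum
  calc ∑ v : Fin n, min (((R ∩ D v).card : ℝ)) M
      ≤ (T.card : ℝ) * M + ∑ v : Fin n, ((Ff ∩ D v).card : ℝ) := hsum
    _ < M * b + s' := by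
        have := hsum2.trans hFfcard
        linarith

set_option maxHeartbeats 2000000 in
open scoped Classical in
lemma perU_bound {n : ℕ} (G : SimpleGraph (Fin n)) (p s ε : ℝ)
    (hexp : IsExpander n G ε s) (hp0 : 0 < p) (hp1 : p < 1) (hε0 : 0 < ε) (hε1 : ε < 1)
    (hL100 : 100 ≤ Real.logb 2 (n : ℝ)) (hn2 : 2 ≤ n) (hs4 : 4 ≤ s)
    (hps : 10 ^ 5 * Real.logb 2 (n : ℝ) ^ 3 ≤ ε * p * s)
    (U : Set (Fin n)) (hU1 : 1 ≤ U.ncard) (hU2 : (U.ncard : ℝ) ≤ 2 / 3 * n) :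
    ∑ R ∈ (G.edgeSet.toFinite.toFinset).powerset,
      (if (∃ F' : Set (Sym2 (Fin n)),
          F' ⊆ (SimpleGraph.fromEdgeSet (↑R : Set (Sym2 (Fin n)))).edgeSet ∧
          ((F'.ncard : ℝ) ≤ ε * p * s / (10 ^ 4 * Real.logb 2 (n : ℝ) ^ 2) * U.ncard) ∧
          (((extNbhd ((SimpleGraph.fromEdgeSet (↑R : Set (Sym2 (Fin n)))).deleteEdges F')
              U).ncard : ℝ) < ε / 4 * U.ncard / Real.logb 2 (n : ℝ) ^ 2))
        then p ^ R.card * (1 - p) ^ ((G.edgeSet.toFinite.toFinset).card - R.card) else 0)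
    ≤ Real.exp (-(20 * (U.ncard : ℝ) * Real.logb 2 (n : ℝ))) := by
  have h1p : (0:ℝ) < 1 - p := by linarith
  set L : ℝ := Real.logb 2 (n : ℝ) with hLdef
  set kR : ℝ := (U.ncard : ℝ) with hkRdef
  have hkR1 : 1 ≤ kR := by rw [hkRdef]; exact_mod_cast hU1
  have hL0 : 0 < L := by linarith
  have hps0 : 0 < p * s := by positivity
  set s' : ℝ := ε * p * s / (10 ^ 4 * L ^ 2) with hs'def
  set M : ℝ := 32 * (p * s) / 10 ^ 4 with hMdef
  have hM0 : 0 < M := by positivity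
  have hpsbig : 10 ^ 5 * L ^ 3 ≤ p * s := by nlinarith
  have hL2 : (10:ℝ)^4 ≤ L ^ 2 := by nlinarith
  have hL3 : (10:ℝ)^4 * L ≤ L ^ 3 := by nlinarith [mul_nonneg hL0.le (sub_nonneg.2 hL2)]
  have hM320 : 320 * L ^ 3 ≤ M := by rw [hMdef]; linarith
  have hM100 : 100 ≤ M := by nlinarith
  set b : ℝ := ε / 4 * kR / L ^ 2 with hbdef
  set z₀ : ℝ := M * b + s' * kR with hz₀def
  obtain ⟨D, I, q, hshape, hcard, hsum, hq, hIq, hIs⟩ :=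
    fan_construction G s ε hexp hε0 hε1 hs4 hn2 U hU1 hU2
  set EG : Finset (Sym2 (Fin n)) := G.edgeSet.toFinite.toFinset with hEGdef
  have hDEG : ∀ v : Fin n, D v ⊆ EG := by
    intro v e he
    rw [hEGdef, Set.Finite.mem_toFinset]
    exact (hshape v e he).2.1
  have hw0 : ∀ R : Finset (Sym2 (Fin n)), 0 ≤ p ^ R.card * (1 - p) ^ (EG.card - R.card) :=
    fun R => by positivity
  -- numeric facts
  set AA : ℝ := ∑ v : Fin n, min (p * ((D v).card : ℝ)) M with hAAdef
  have hAA : (q : ℝ) * M ≤ AA := by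
    have hI0 : (0:ℝ) < I := by linarith
    have hMpI : M ≤ p * I := by
      have h1 : M ≤ p * (s / 4) := by rw [hMdef]; nlinarith
      have h2 : p * (s / 4) ≤ p * I := mul_le_mul_of_nonneg_left hIs hp0.le
      linarith
    have hpoint : ∀ v : Fin n, M * ((D v).card : ℝ)
        ≤ (I:ℝ) * min (p * ((D v).card : ℝ)) M := by
      intro v
      have hmvI : ((D v).card : ℝ) ≤ (I : ℝ) := by exact_mod_cast hcard v
      have hmv0 : (0:ℝ) ≤ ((D v).card : ℝ) := by positivity
      rcases le_total (p * ((D v).card : ℝ)) M with hc | hc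
      · rw [min_eq_left hc]
        nlinarith
      · rw [min_eq_right hc]
        nlinarith
    have hsum' := Finset.sum_le_sum (fun v (_ : v ∈ Finset.univ) => hpoint v)
    rw [← Finset.mul_sum, ← Finset.mul_sum] at hsum'
    have hcast : ∑ v : Fin n, ((D v).card : ℝ) = (I : ℝ) * (q : ℝ) := by
      rw [← Nat.cast_sum, hsum]
      push_cast
      ring
    rw [hcast] at hsum'
    rw [hAAdef]
    have := (mul_le_mul_iff_right₀ hI0).1 (by nlinarith : (I:ℝ) * ((q:ℝ) * M) ≤ (I:ℝ) * ∑ v : Fin n, min (p * ((D v).card : ℝ)) M)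
    exact this
  have hnerr : (n : ℝ) * Real.exp (-M / 72) ≤ 1 := by
    have hn0 : (0:ℝ) < n := by
      have h2 : (2:ℝ) ≤ (n:ℝ) := by exact_mod_cast hn2
      linarith
    have hlog2pos : (0:ℝ) < Real.log 2 := Real.log_pos (by norm_num)
    have hlog2lt : Real.log 2 < 1 := by
      have := Real.log_two_lt_d9
      linarith
    have hlogn0 : 0 ≤ Real.log (n:ℝ) := Real.log_nonneg (by linarith)
    have hlogn : Real.log (n : ℝ) ≤ L := by
      rw [hLdef, Real.logb]
      rw [le_div_iff₀ hlog2pos]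
      nlinarith
    have hnexp : (n : ℝ) ≤ Real.exp L := by
      calc (n:ℝ) = Real.exp (Real.log (n:ℝ)) := (Real.exp_log hn0).symm
        _ ≤ Real.exp L := Real.exp_le_exp.2 hlogn
    have hLM : L ≤ M / 72 := by nlinarith
    calc (n : ℝ) * Real.exp (-M / 72) ≤ Real.exp L * Real.exp (-M / 72) :=
          mul_le_mul_of_nonneg_right hnexp (Real.exp_pos _).le
      _ = Real.exp (L + -M / 72) := (Real.exp_add _ _).symm
      _ ≤ Real.exp 0 := Real.exp_le_exp.2 (by linarith)
      _ = 1 := Real.exp_zero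
  have hbq : b ≤ (q : ℝ) / 4 := by
    rw [hbdef]
    have : ε / 4 * kR / L ^ 2 = (ε * kR / L ^ 2) / 4 := by ring
    rw [this]
    linarith
  have hMb : M * b ≤ (q : ℝ) * M / 4 := by
    have := mul_le_mul_of_nonneg_left hbq hM0.le
    nlinarith
  have hqM32 : 32 * (s' * kR) ≤ (q : ℝ) * M := by
    have heq : (ε * kR / L ^ 2) * M = 32 * (s' * kR) := by
      rw [hs'def, hMdef]
      field_simp
    calc 32 * (s' * kR) = (ε * kR / L ^ 2) * M := heq.symm
      _ ≤ (q : ℝ) * M := mul_le_mul_of_nonneg_right hq hM0.le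
  have hs'10 : 10 * L ≤ s' := by
    rw [hs'def]
    rw [le_div_iff₀ (by positivity)]
    nlinarith
  have hBE : 10 * (L * kR) ≤ s' * kR := by
    have := mul_le_mul_of_nonneg_right hs'10 (by linarith : (0:ℝ) ≤ kR)
    nlinarith
  have hE100 : 100 ≤ L * kR := by nlinarith
  have hnum : z₀ / 8 + (-AA / 9 + (n : ℝ) * Real.exp (-M / 72))
      ≤ -(20 * kR * L) := by
    have hz1 : z₀ ≤ (q:ℝ) * M / 4 + s' * kR := by
      rw [hz₀def]; linarith
    nlinarith [hAA, hqM32]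
  -- step 1 : pointwise domination by the exponential weight
  have step1 : ∑ R ∈ EG.powerset,
      (if (∃ F' : Set (Sym2 (Fin n)),
          F' ⊆ (SimpleGraph.fromEdgeSet (↑R : Set (Sym2 (Fin n)))).edgeSet ∧
          ((F'.ncard : ℝ) ≤ s' * kR) ∧
          (((extNbhd ((SimpleGraph.fromEdgeSet (↑R : Set (Sym2 (Fin n)))).deleteEdges F')
              U).ncard : ℝ) < b))
        then p ^ R.card * (1 - p) ^ (EG.card - R.card) else 0)
      ≤ ∑ R ∈ EG.powerset, p ^ R.card * (1 - p) ^ (EG.card - R.card)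
          * Real.exp ((z₀ - ∑ v : Fin n, min (((R ∩ D v).card : ℝ)) M) / 8) := by
    refine Finset.sum_le_sum fun R _ => ?_
    split_ifs with hfail
    · have hZR : ∑ v : Fin n, min (((R ∩ D v).card : ℝ)) M < z₀ :=
        fail_imp_Z_small hshape M (s' * kR) b hM0 R hfail
      have hexp1 : (1:ℝ) ≤ Real.exp ((z₀ - ∑ v : Fin n, min (((R ∩ D v).card : ℝ)) M) / 8) := by
        rw [show (1:ℝ) = Real.exp 0 from (Real.exp_zero).symm]
        apply Real.exp_le_exp.2
        linarith
      calc p ^ R.card * (1 - p) ^ (EG.card - R.card)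
          = p ^ R.card * (1 - p) ^ (EG.card - R.card) * 1 := (mul_one _).symm
        _ ≤ _ := mul_le_mul_of_nonneg_left hexp1 (hw0 R)
    · exact mul_nonneg (hw0 R) (Real.exp_pos _).le
  -- step 2 : factor the exponential
  have hsplit : ∀ R : Finset (Sym2 (Fin n)),
      Real.exp ((z₀ - ∑ v : Fin n, min (((R ∩ D v).card : ℝ)) M) / 8)
      = Real.exp (z₀ / 8)
        * ∏ v : Fin n, Real.exp (-(min (((R ∩ D v).card : ℝ)) M) / 8) := by
    intro R
    rw [← Real.exp_sum, ← Real.exp_add]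
    congr 1
    have : ∑ v : Fin n, -(min (((R ∩ D v).card : ℝ)) M) / 8
        = -(∑ v : Fin n, min (((R ∩ D v).card : ℝ)) M) / 8 := by
      rw [← Finset.sum_div, ← Finset.sum_neg_distrib]
    rw [this]
    ring
  have step2 : ∑ R ∈ EG.powerset, p ^ R.card * (1 - p) ^ (EG.card - R.card)
        * Real.exp ((z₀ - ∑ v : Fin n, min (((R ∩ D v).card : ℝ)) M) / 8)
      = Real.exp (z₀ / 8) * ∑ R ∈ EG.powerset, p ^ R.card * (1 - p) ^ (EG.card - R.card)
          * ∏ v : Fin n, Real.exp (-(min (((R ∩ D v).card : ℝ)) M) / 8) := by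
    rw [Finset.mul_sum]
    refine Finset.sum_congr rfl fun R _ => ?_
    rw [hsplit R]
    ring
  -- step 3 : factorization over blocks
  have step3 : ∑ R ∈ EG.powerset, p ^ R.card * (1 - p) ^ (EG.card - R.card)
        * ∏ v : Fin n, Real.exp (-(min (((R ∩ D v).card : ℝ)) M) / 8)
      = ∏ v : Fin n, ∑ t ∈ Finset.range ((D v).card + 1),
          ((D v).card.choose t : ℝ) * (p ^ t * (1 - p) ^ ((D v).card - t)
            * Real.exp (-(min (t : ℝ) M) / 8)) := by
    have hfact := prod_factorization p Finset.univ EG D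
      (fun v _ => hDEG v)
      (fun v _ u _ hvu => fanShape_disjoint hshape v u hvu)
      (fun v t => Real.exp (-(min (t : ℝ) M) / 8))
    rw [hfact]
    exact Finset.prod_congr rfl fun v _ => block_sum p (D v) (fun t => Real.exp (-(min (t : ℝ) M) / 8))
  -- step 4 : apply the mgf bound per block
  have step4 : ∏ v : Fin n, (∑ t ∈ Finset.range ((D v).card + 1),
          ((D v).card.choose t : ℝ) * (p ^ t * (1 - p) ^ ((D v).card - t)
            * Real.exp (-(min (t : ℝ) M) / 8)))
      ≤ ∏ v : Fin n, Real.exp (-(min (p * ((D v).card : ℝ)) M) / 9 + Real.exp (-M / 72)) := by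
    refine Finset.prod_le_prod (fun v _ => ?_) (fun v _ => mgf_bound p M hp0 hp1 hM0 _)
    exact Finset.sum_nonneg fun t _ => by positivity
  -- step 5 : collapse the product of exponentials
  have step5 : ∏ v : Fin n, Real.exp (-(min (p * ((D v).card : ℝ)) M) / 9 + Real.exp (-M / 72))
      = Real.exp (-(∑ v : Fin n, min (p * ((D v).card : ℝ)) M) / 9
          + (n : ℝ) * Real.exp (-M / 72)) := by
    rw [← Real.exp_sum, Finset.sum_add_distrib, Finset.sum_const, Finset.card_univ,
      Fintype.card_fin, nsmul_eq_mul]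
    congr 1
    congr 1
    rw [← Finset.sum_div, ← Finset.sum_neg_distrib]
  -- assemble
  calc ∑ R ∈ EG.powerset,
      (if (∃ F' : Set (Sym2 (Fin n)),
          F' ⊆ (SimpleGraph.fromEdgeSet (↑R : Set (Sym2 (Fin n)))).edgeSet ∧
          ((F'.ncard : ℝ) ≤ s' * kR) ∧
          (((extNbhd ((SimpleGraph.fromEdgeSet (↑R : Set (Sym2 (Fin n)))).deleteEdges F')
              U).ncard : ℝ) < b))
        then p ^ R.card * (1 - p) ^ (EG.card - R.card) else 0)
      ≤ ∑ R ∈ EG.powerset, p ^ R.card * (1 - p) ^ (EG.card - R.card)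
          * Real.exp ((z₀ - ∑ v : Fin n, min (((R ∩ D v).card : ℝ)) M) / 8) := step1
    _ = Real.exp (z₀ / 8) * ∑ R ∈ EG.powerset, p ^ R.card * (1 - p) ^ (EG.card - R.card)
          * ∏ v : Fin n, Real.exp (-(min (((R ∩ D v).card : ℝ)) M) / 8) := step2
    _ = Real.exp (z₀ / 8) * ∏ v : Fin n, ∑ t ∈ Finset.range ((D v).card + 1),
          ((D v).card.choose t : ℝ) * (p ^ t * (1 - p) ^ ((D v).card - t)
            * Real.exp (-(min (t : ℝ) M) / 8)) := by rw [step3]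
    _ ≤ Real.exp (z₀ / 8)
          * ∏ v : Fin n, Real.exp (-(min (p * ((D v).card : ℝ)) M) / 9
              + Real.exp (-M / 72)) := by
        apply mul_le_mul_of_nonneg_left step4 (Real.exp_pos _).le
    _ = Real.exp (z₀ / 8) * Real.exp (-AA / 9 + (n : ℝ) * Real.exp (-M / 72)) := by
        rw [step5]
    _ = Real.exp (z₀ / 8 + (-AA / 9 + (n : ℝ) * Real.exp (-M / 72))) :=
        (Real.exp_add _ _).symm
    _ ≤ Real.exp (-(20 * kR * L)) := Real.exp_le_exp.2 hnum

set_option maxRecDepth 10000 in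
set_option maxHeartbeats 1000000 in
open scoped Classical in
theorem statement18 :
    ∃ N : ℕ, ∀ n : ℕ, N ≤ n → ∀ s : ℝ, (N : ℝ) ≤ s →
      ∀ p ε : ℝ, 0 < p → p < 1 → 0 < ε → ε < 1 →
        ∀ G : SimpleGraph (Fin n), IsExpander n G ε s →
          10 ^ 5 * Real.logb 2 n ^ 3 ≤ ε * p * s →
          edgeSubgraphProb n G p
              {H : SimpleGraph (Fin n) |
                ¬ IsExpander n H (ε / 4) (ε * p * s / (10 ^ 4 * Real.logb 2 n ^ 2))}
            < 2 / n := by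
  refine ⟨2 ^ 100, ?_⟩
  intro n hn s hs p ε hp0 hp1 hε0 hε1 G hexp hps
  have hn2 : 2 ≤ n := le_trans (by norm_num) hn
  have hnR : (2:ℝ) ^ 100 ≤ (n : ℝ) := by exact_mod_cast hn
  have hn0 : (0:ℝ) < (n:ℝ) := by
    have : (2:ℝ) ≤ (n:ℝ) := by exact_mod_cast hn2
    linarith
  have hs4 : 4 ≤ s := by
    have h1 : ((2:ℝ) ^ 100 : ℝ) ≤ s := by exact_mod_cast hs
    have h2 : (4:ℝ) ≤ (2:ℝ) ^ 100 := by norm_num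
    linarith
  have hL100 : 100 ≤ Real.logb 2 (n : ℝ) := by
    calc (100:ℝ) = Real.logb 2 ((2:ℝ) ^ (100:ℕ)) := by
          rw [Real.logb_pow, Real.logb_self_eq_one (by norm_num)]
          norm_num
      _ ≤ Real.logb 2 (n : ℝ) :=
          Real.logb_le_logb_of_le (by norm_num) (by positivity) (by exact_mod_cast hn)
  set L : ℝ := Real.logb 2 (n : ℝ) with hLdef
  have hL0 : 0 < L := by linarith
  set EG : Finset (Sym2 (Fin n)) := G.edgeSet.toFinite.toFinset with hEGdef
  have hEGcard : G.edgeSet.ncard = EG.card := Set.ncard_eq_toFinset_card _ _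
  have hmemEG : ∀ (F : Finset (Sym2 (Fin n))),
      (↑F : Set (Sym2 (Fin n))) ⊆ G.edgeSet ↔ F ⊆ EG := by
    intro F
    constructor
    · intro h e he
      rw [hEGdef, Set.Finite.mem_toFinset]
      exact h he
    · intro h e he
      have := h he
      rw [hEGdef, Set.Finite.mem_toFinset] at this
      exact this
  have hnexp : (n : ℝ) ≤ Real.exp L := by
    have hlog2pos : (0:ℝ) < Real.log 2 := Real.log_pos (by norm_num)
    have hlog2lt : Real.log 2 < 1 := by
      have := Real.log_two_lt_d9
      linarith
    have hlogn0 : 0 ≤ Real.log (n:ℝ) := Real.log_nonneg (by linarith)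
    have hlogn : Real.log (n : ℝ) ≤ L := by
      rw [hLdef, Real.logb, le_div_iff₀ hlog2pos]
      nlinarith
    calc (n:ℝ) = Real.exp (Real.log (n:ℝ)) := (Real.exp_log hn0).symm
      _ ≤ Real.exp L := Real.exp_le_exp.2 hlogn
  -- the weight function
  have hw0 : ∀ F : Finset (Sym2 (Fin n)), 0 ≤ p ^ F.card * (1 - p) ^ (EG.card - F.card) := by
    intro F
    have : (0:ℝ) ≤ 1 - p := by linarith
    positivity
  -- failure predicate for a fixed vertex set
  set FailP : Set (Fin n) → Finset (Sym2 (Fin n)) → Prop :=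
    fun U R => ∃ F' : Set (Sym2 (Fin n)),
      F' ⊆ (SimpleGraph.fromEdgeSet (↑R : Set (Sym2 (Fin n)))).edgeSet ∧
      ((F'.ncard : ℝ) ≤ ε * p * s / (10 ^ 4 * L ^ 2) * U.ncard) ∧
      (((extNbhd ((SimpleGraph.fromEdgeSet (↑R : Set (Sym2 (Fin n)))).deleteEdges F')
          U).ncard : ℝ) < ε / 4 * U.ncard / L ^ 2) with hFailP
  set A : Finset (Fin n) → Finset (Sym2 (Fin n)) → ℝ :=
    fun Uf F => (if ((↑F : Set (Sym2 (Fin n))) ⊆ G.edgeSet ∧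
        1 ≤ (↑Uf : Set (Fin n)).ncard ∧
        (((↑Uf : Set (Fin n)).ncard : ℝ) ≤ 2 / 3 * (n:ℝ)) ∧ FailP (↑Uf) F)
      then p ^ F.card * (1 - p) ^ (EG.card - F.card) else 0) with hA
  have hA0 : ∀ Uf F, 0 ≤ A Uf F := by
    intro Uf F
    rw [hA]
    dsimp only
    split_ifs
    · exact hw0 F
    · exact le_refl 0
  -- Step (i) : pointwise bound of the indicator
  have stepi : edgeSubgraphProb n G p
      {H : SimpleGraph (Fin n) |
        ¬ IsExpander n H (ε / 4) (ε * p * s / (10 ^ 4 * L ^ 2))}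
      ≤ ∑ F : Finset (Sym2 (Fin n)), ∑ Uf ∈ (Finset.univ : Finset (Fin n)).powerset, A Uf F := by
    rw [edgeSubgraphProb]
    refine Finset.sum_le_sum fun F _ => ?_
    rw [Set.indicator_apply]
    split_ifs with hmem
    · rw [Set.mem_setOf_eq] at hmem
      obtain ⟨hFsub, hnotexp⟩ := hmem
      rw [Set.mem_setOf_eq] at hnotexp
      unfold IsExpander at hnotexp
      push_neg at hnotexp
      obtain ⟨U, F', hF'sub, hU1, hU2, hF'card, hNlt⟩ := hnotexp
      have hUf : ((↑U.toFinset : Set (Fin n))) = U := Set.coe_toFinset U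
      have hterm : A U.toFinset F = p ^ F.card * (1 - p) ^ (EG.card - F.card) := by
        rw [hA]
        dsimp only
        rw [if_pos]
        rw [hUf]
        exact ⟨hFsub, hU1, hU2, F', hF'sub, hF'card, hNlt⟩
      have hle := Finset.single_le_sum (f := fun Uf => A Uf F)
        (fun Uf _ => hA0 Uf F)
        (Finset.mem_powerset.2 (Finset.subset_univ U.toFinset))
      rw [hEGcard, ← hterm]
      exact hle
    · exact Finset.sum_nonneg fun Uf _ => hA0 Uf F
  -- Step (ii) : swap the sums
  have stepii : ∑ F : Finset (Sym2 (Fin n)), ∑ Uf ∈ (Finset.univ : Finset (Fin n)).powerset, A Uf F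
      = ∑ Uf ∈ (Finset.univ : Finset (Fin n)).powerset, ∑ F : Finset (Sym2 (Fin n)), A Uf F :=
    Finset.sum_comm
  -- Step (iii) : restrict inner sums to the powerset of EG
  have stepiii : ∀ Uf : Finset (Fin n), ∑ F : Finset (Sym2 (Fin n)), A Uf F
      = ∑ F ∈ EG.powerset, A Uf F := by
    intro Uf
    symm
    apply Finset.sum_subset (Finset.subset_univ _)
    intro F _ hF
    rw [hA]
    dsimp only
    rw [if_neg]
    intro hcond
    exact hF (Finset.mem_powerset.2 ((hmemEG F).1 hcond.1))
  -- Step (iv) : apply the per-U bound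
  have stepiv : ∀ Uf ∈ (Finset.univ : Finset (Fin n)).powerset,
      ∑ F ∈ EG.powerset, A Uf F
      ≤ (if Uf = ∅ then 0 else Real.exp (-(20 * (Uf.card : ℝ) * L))) := by
    intro Uf _
    by_cases hUe : Uf = ∅
    · rw [if_pos hUe]
      have : ∀ F ∈ EG.powerset, A Uf F = 0 := by
        intro F _
        rw [hA]
        dsimp only
        rw [if_neg]
        intro hcond
        have := hcond.2.1
        rw [hUe] at this
        simp at this
      rw [Finset.sum_congr rfl this, Finset.sum_const, smul_zero]
    · rw [if_neg hUe]
      by_cases hU2 : (((↑Uf : Set (Fin n)).ncard : ℝ) ≤ 2 / 3 * (n:ℝ))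
      · have hU1 : 1 ≤ (↑Uf : Set (Fin n)).ncard := by
          rw [Set.ncard_coe_finset]
          exact Finset.card_pos.2 (Finset.nonempty_iff_ne_empty.2 hUe)
        have hbound := perU_bound G p s ε hexp hp0 hp1 hε0 hε1 hL100 hn2 hs4 hps
          (↑Uf) hU1 hU2
        have hmono : ∑ F ∈ EG.powerset, A Uf F
            ≤ ∑ R ∈ EG.powerset,
              (if FailP (↑Uf) R then p ^ R.card * (1 - p) ^ (EG.card - R.card) else 0) := by
          refine Finset.sum_le_sum fun F _ => ?_
          rw [hA]
          dsimp only
          split_ifs with h1 h2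
          · exact le_refl _
          · exact absurd h1.2.2.2 h2
          · exact hw0 F
          · exact le_refl _
        have hcard' : ((↑Uf : Set (Fin n)).ncard : ℝ) = (Uf.card : ℝ) := by
          rw [Set.ncard_coe_finset]
        calc ∑ F ∈ EG.powerset, A Uf F ≤ _ := hmono
          _ ≤ Real.exp (-(20 * ((↑Uf : Set (Fin n)).ncard : ℝ) * L)) := hbound
          _ = Real.exp (-(20 * (Uf.card : ℝ) * L)) := by rw [hcard']
      · have : ∀ F ∈ EG.powerset, A Uf F = 0 := by
          intro F _
          rw [hA]
          dsimp only
          rw [if_neg]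
          intro hcond
          exact hU2 hcond.2.2.1
        rw [Finset.sum_congr rfl this, Finset.sum_const, smul_zero]
        exact (Real.exp_pos _).le
  -- Step (v) : final numeric bound
  have stepv : ∑ Uf ∈ (Finset.univ : Finset (Fin n)).powerset,
      (if Uf = ∅ then 0 else Real.exp (-(20 * (Uf.card : ℝ) * L))) < 2 / n := by
    have hform : ∀ Uf : Finset (Fin n),
        (if Uf = ∅ then (0:ℝ) else Real.exp (-(20 * (Uf.card : ℝ) * L)))
        = (fun m : ℕ => if m = 0 then (0:ℝ) else Real.exp (-(20 * (m : ℝ) * L))) Uf.card := by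
      intro Uf
      show (if Uf = ∅ then (0:ℝ) else Real.exp (-(20 * (Uf.card : ℝ) * L)))
        = (if Uf.card = 0 then (0:ℝ) else Real.exp (-(20 * (Uf.card : ℝ) * L)))
      by_cases hUe : Uf = ∅
      · rw [if_pos hUe, if_pos (by rw [hUe]; exact Finset.card_empty)]
      · rw [if_neg hUe, if_neg (by simpa [Finset.card_eq_zero] using hUe)]
    have hstep : ∑ Uf ∈ (Finset.univ : Finset (Fin n)).powerset,
        (if Uf = ∅ then (0:ℝ) else Real.exp (-(20 * (Uf.card : ℝ) * L)))
        = ∑ m ∈ Finset.range (n + 1),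
            n.choose m • (if m = 0 then (0:ℝ) else Real.exp (-(20 * (m : ℝ) * L))) := by
      rw [Finset.sum_congr rfl (fun Uf _ => hform Uf)]
      have h2 := Finset.sum_powerset_apply_card
        (f := fun m : ℕ => if m = 0 then (0:ℝ) else Real.exp (-(20 * (m : ℝ) * L)))
        (x := (Finset.univ : Finset (Fin n)))
      rw [Finset.card_univ, Fintype.card_fin] at h2
      exact h2
    rw [hstep]
    -- bound the resulting sum over m
    have hterm : ∀ m ∈ (Finset.range (n + 1)).erase 0,
        (n.choose m) • (if m = 0 then (0:ℝ) else Real.exp (-(20 * (m : ℝ) * L)))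
        ≤ Real.exp (-(19 * L)) := by
      intro m hm
      have hm0 : m ≠ 0 := (Finset.mem_erase.1 hm).1
      have hm1 : (1:ℝ) ≤ (m:ℝ) := by
        have : 1 ≤ m := Nat.one_le_iff_ne_zero.2 hm0
        exact_mod_cast this
      rw [if_neg hm0, nsmul_eq_mul]
      have hchoose : ((n.choose m : ℕ) : ℝ) ≤ ((n:ℝ)) ^ m := by
        calc ((n.choose m : ℕ) : ℝ) ≤ ((n ^ m : ℕ) : ℝ) := by
              exact_mod_cast Nat.choose_le_pow n m
          _ = (n:ℝ) ^ m := by push_cast; ring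
      have hnm : ((n:ℝ)) ^ m ≤ Real.exp ((m:ℝ) * L) := by
        calc ((n:ℝ)) ^ m ≤ (Real.exp L) ^ m := pow_le_pow_left₀ hn0.le hnexp m
          _ = Real.exp ((m:ℝ) * L) := by rw [← Real.exp_nat_mul]
      calc (n.choose m : ℝ) * Real.exp (-(20 * (m : ℝ) * L))
          ≤ Real.exp ((m:ℝ) * L) * Real.exp (-(20 * (m : ℝ) * L)) := by
            apply mul_le_mul_of_nonneg_right (hchoose.trans hnm) (Real.exp_pos _).le
        _ = Real.exp ((m:ℝ) * L + -(20 * (m : ℝ) * L)) := (Real.exp_add _ _).symm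
        _ ≤ Real.exp (-(19 * L)) := by
            apply Real.exp_le_exp.2
            nlinarith
    have herase : ∑ m ∈ Finset.range (n + 1),
        (n.choose m) • (if m = 0 then (0:ℝ) else Real.exp (-(20 * (m : ℝ) * L)))
        = ∑ m ∈ (Finset.range (n + 1)).erase 0,
          (n.choose m) • (if m = 0 then (0:ℝ) else Real.exp (-(20 * (m : ℝ) * L))) := by
      symm
      apply Finset.sum_erase
      rw [if_pos rfl, smul_zero]
    rw [herase]
    have hcard : ((Finset.range (n + 1)).erase 0).card ≤ n := by
      rw [Finset.card_erase_of_mem (Finset.mem_range.2 (Nat.succ_pos n)), Finset.card_range]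
      omega
    calc ∑ m ∈ (Finset.range (n + 1)).erase 0,
          (n.choose m) • (if m = 0 then (0:ℝ) else Real.exp (-(20 * (m : ℝ) * L)))
        ≤ ((Finset.range (n + 1)).erase 0).card • Real.exp (-(19 * L)) :=
          Finset.sum_le_card_nsmul _ _ _ hterm
      _ ≤ (n:ℝ) * Real.exp (-(19 * L)) := by
          rw [nsmul_eq_mul]
          apply mul_le_mul_of_nonneg_right _ (Real.exp_pos _).le
          exact_mod_cast hcard
      _ ≤ Real.exp L * Real.exp (-(19 * L)) :=
          mul_le_mul_of_nonneg_right hnexp (Real.exp_pos _).le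
      _ = Real.exp (L + -(19 * L)) := (Real.exp_add _ _).symm
      _ = Real.exp (-(18 * L)) := by ring_nf
      _ < 2 / n := by
          have h1 : Real.exp (-(18 * L)) ≤ Real.exp (-L) := Real.exp_le_exp.2 (by linarith)
          have h2 : Real.exp (-L) = 1 / Real.exp L := by
            rw [Real.exp_neg]
            ring
          have h3 : 1 / Real.exp L ≤ 1 / (n:ℝ) := by
            apply div_le_div_of_nonneg_left (by norm_num) hn0 hnexp
          have h5 : 0 < 1/(n:ℝ) := by positivity
          have h6 : 2/(n:ℝ) = 1/n + 1/n := by ring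
          calc Real.exp (-(18 * L)) ≤ Real.exp (-L) := h1
            _ = 1 / Real.exp L := h2
            _ ≤ 1 / (n:ℝ) := h3
            _ < 2 / (n:ℝ) := by rw [h6]; linarith
  calc edgeSubgraphProb n G p _ ≤ _ := stepi
    _ = _ := stepii
    _ = ∑ Uf ∈ (Finset.univ : Finset (Fin n)).powerset, ∑ F ∈ EG.powerset, A Uf F :=
        Finset.sum_congr rfl fun Uf _ => stepiii Uf
    _ ≤ ∑ Uf ∈ (Finset.univ : Finset (Fin n)).powerset,
        (if Uf = ∅ then 0 else Real.exp (-(20 * (Uf.card : ℝ) * L))) :=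
        Finset.sum_le_sum stepiv
    _ < 2 / n := stepv
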